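/- arXiv:2005.00665 — 2 statements merged into one kernel-verified Lean document; each statement's English description precedes it below -/
import Mathlib

section
/- Let n₁ and n₂ be relatively prime positive integers and let α ∈ [0,1] be real. Then there exist an integer j₀ and sequences (N_{1,j})_{j≥j₀}, (N_{2,j})_{j≥j₀} of positive integers such that n₁·N_{1,j} + n₂·N_{2,j} = j for every j ≥ j₀, both N_{1,j} → ∞ and N_{2,j} → ∞ as j → ∞, and the ratio n₁·N_{1,j}/(n₁·N_{1,j} + n₂·N_{2,j}) converges to α as j → ∞. -/
open Complex Set Filter Topology

noncomputable section

/-- The quadratic polynomial `f_c(z) = z² + c`. -/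
def fc (c z : ℂ) : ℂ := z ^ 2 + c

/-- The `n`-th iterate of `f_c`. -/
def fIter (c : ℂ) (n : ℕ) : ℂ → ℂ := (fc c)^[n]

/-- The multiplier: the derivative of the `n`-th iterate of `f_c` at `z`. -/
def multiplier (c : ℂ) (n : ℕ) (z : ℂ) : ℂ := deriv (fIter c n) z

/-- `z` is a periodic point of exact period `n ≥ 1` of `f_c`. -/
def ExactPeriodic (c : ℂ) (n : ℕ) (z : ℂ) : Prop :=
  1 ≤ n ∧ fIter c n z = z ∧ ∀ m, 1 ≤ m → m < n → fIter c m z ≠ z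

/-- The forward orbit of `z` under `f_c`. -/
def orbitOf (c z : ℂ) : Set ℂ := Set.range fun k => fIter c k z

/-- `ρ` is a local multiplier function on `U` of the periodic orbit of the periodic
point `z₀` (of exact period `n`) of `f_{c₀}`. -/
def IsLocalMultiplier (c₀ : ℂ) (n : ℕ) (z₀ : ℂ) (U : Set ℂ) (ρ : ℂ → ℂ) : Prop :=
  IsOpen U ∧ IsConnected U ∧ c₀ ∈ U ∧
    ∃ p : ℂ → ℂ, AnalyticOnNhd ℂ p U ∧ p c₀ ∈ orbitOf c₀ z₀ ∧
      (∀ c ∈ U, ExactPeriodic c n (p c)) ∧ ∀ c ∈ U, ρ c = multiplier c n (p c)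

/-- `ν` is a ν-function on `U` of the periodic orbit of `z₀`. -/
def IsNuFunction (c₀ : ℂ) (n : ℕ) (z₀ : ℂ) (U : Set ℂ) (ν : ℂ → ℂ) : Prop :=
  ∃ ρ : ℂ → ℂ, IsLocalMultiplier c₀ n z₀ U ρ ∧ (∀ c ∈ U, ρ c ≠ 0) ∧
    ∀ c ∈ U, ν c = deriv ρ c / (n * ρ c)

/-- `X_n`: the set of critical points of period-`n` multipliers. -/
def Xn (n : ℕ) : Set ℂ :=
  {c₀ | ∃ (z₀ : ℂ) (U : Set ℂ) (ρ : ℂ → ℂ),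
    ExactPeriodic c₀ n z₀ ∧ IsLocalMultiplier c₀ n z₀ U ρ ∧ deriv ρ c₀ = 0}

/-- The accumulation set `X` of critical points of multipliers. -/
def Xacc : Set ℂ :=
  ⋂ k ∈ {k : ℕ | 1 ≤ k}, closure (⋃ n ∈ {n : ℕ | k ≤ n}, Xn n)

/-- The Mandelbrot set. -/
def Mset : Set ℂ := {c | Bornology.IsBounded (Set.range fun n => fIter c n 0)}

/-- The set `Y_c`. -/
def Yset (c : ℂ) : Set ℂ :=
  closure {w | ∃ (n : ℕ) (z : ℂ) (U : Set ℂ) (ν : ℂ → ℂ),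
    ExactPeriodic c n z ∧ 1 < ‖multiplier c n z‖ ∧
    IsNuFunction c n z U ν ∧ ν c = w}

/-- The filled Julia set of `f_c`. -/
def filledJulia (c : ℂ) : Set ℂ :=
  {z | Bornology.IsBounded (Set.range fun n => fIter c n z)}

/-- The Julia set of `f_c`. -/
def juliaSet (c : ℂ) : Set ℂ := frontier (filledJulia c)


namespace Stmt15Aux

/-- Target real value for `n₁ · N₁ⱼ`. -/
noncomputable def betaF (α : ℝ) (j : ℕ) : ℝ := α * j + (1 - 2 * α) * Real.sqrt j

/-- Base integer: ceiling of `betaF / n₁`. -/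
noncomputable def bF (n₁ : ℕ) (α : ℝ) (j : ℕ) : ℕ := ⌈betaF α j / n₁⌉₊

/-- The sequence `N₁`: the unique integer in `[bF, bF + n₂)` congruent to
`j · n₁⁻¹ (mod n₂)`. -/
noncomputable def N1F (n₁ n₂ : ℕ) (α : ℝ) (j : ℕ) : ℕ :=
  bF n₁ α j +
    (((j * ((n₁ : ZMod n₂)⁻¹).val : ℕ) : ZMod n₂) - ((bF n₁ α j : ℕ) : ZMod n₂)).val

/-- The sequence `N₂`. -/
noncomputable def N2F (n₁ n₂ : ℕ) (α : ℝ) (j : ℕ) : ℕ := (j - n₁ * N1F n₁ n₂ α j) / n₂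

lemma hv {n₂ : ℕ} [NeZero n₂] (x : ZMod n₂) : ((x.val : ℕ) : ZMod n₂) = x :=
  (ZMod.natCast_val x).trans (ZMod.cast_id _ _)

lemma N1_mod (n₁ n₂ : ℕ) [NeZero n₂] (hcop : Nat.Coprime n₁ n₂) (α : ℝ) (j : ℕ) :
    ((n₁ * N1F n₁ n₂ α j : ℕ) : ZMod n₂) = (j : ZMod n₂) := by
  have hinv : (n₁ : ZMod n₂) * (n₁ : ZMod n₂)⁻¹ = 1 := ZMod.coe_mul_inv_eq_one n₁ hcop
  rw [N1F]
  push_cast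
  rw [hv, hv]
  linear_combination (j : ZMod n₂) * hinv

lemma N1_lower (n₁ : ℕ) (h₁ : 0 < n₁) (n₂ : ℕ) (α : ℝ) (j : ℕ) :
    betaF α j ≤ (n₁ : ℝ) * N1F n₁ n₂ α j := by
  have h1 : betaF α j / n₁ ≤ bF n₁ α j := Nat.le_ceil _
  have h2 : (bF n₁ α j : ℝ) ≤ N1F n₁ n₂ α j := by
    exact_mod_cast Nat.cast_le.mpr (Nat.le_add_right _ _)
  have hn : (0 : ℝ) < n₁ := by exact_mod_cast h₁
  calc betaF α j ≤ n₁ * (betaF α j / n₁) := by field_simp; exact le_rfl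
    _ ≤ n₁ * N1F n₁ n₂ α j := by
        apply mul_le_mul_of_nonneg_left (h1.trans h2) hn.le

lemma N1_upper (n₁ : ℕ) (h₁ : 0 < n₁) (n₂ : ℕ) [NeZero n₂] (α : ℝ) (j : ℕ)
    (hβ : 0 ≤ betaF α j) :
    (n₁ : ℝ) * N1F n₁ n₂ α j ≤ betaF α j + n₁ * (n₂ + 1) := by
  have hn : (0 : ℝ) < n₁ := by exact_mod_cast h₁
  have hval : (((((j * ((n₁ : ZMod n₂)⁻¹).val : ℕ) : ZMod n₂)
      - ((bF n₁ α j : ℕ) : ZMod n₂)).val : ℝ)) ≤ n₂ := by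
    exact_mod_cast (ZMod.val_lt _).le
  have hb : (bF n₁ α j : ℝ) < betaF α j / n₁ + 1 :=
    Nat.ceil_lt_add_one (by positivity)
  have hN : (N1F n₁ n₂ α j : ℝ) ≤ betaF α j / n₁ + 1 + n₂ := by
    rw [N1F, Nat.cast_add]
    linarith
  calc (n₁ : ℝ) * N1F n₁ n₂ α j ≤ n₁ * (betaF α j / n₁ + 1 + n₂) :=
        mul_le_mul_of_nonneg_left hN hn.le
    _ = betaF α j + n₁ * (n₂ + 1) := by field_simp; ring

lemma beta_ge (α : ℝ) (hα0 : 0 ≤ α) (j : ℕ) (hj : 4 ≤ j) :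
    Real.sqrt j ≤ betaF α j := by
  have hs : Real.sqrt j * Real.sqrt j = j := Real.mul_self_sqrt (by positivity)
  have h2 : (2 : ℝ) ≤ Real.sqrt j := by
    rw [show (2 : ℝ) = Real.sqrt 4 by
      rw [show (4 : ℝ) = 2 ^ 2 by norm_num, Real.sqrt_sq (by norm_num)]]
    exact Real.sqrt_le_sqrt (by exact_mod_cast hj)
  have h3 : 2 * Real.sqrt j ≤ j := by nlinarith
  have : 0 ≤ α * ((j : ℝ) - 2 * Real.sqrt j) := by
    apply mul_nonneg hα0; linarith
  unfold betaF; nlinarith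

lemma beta_le (α : ℝ) (hα1 : α ≤ 1) (j : ℕ) (hj : 4 ≤ j) :
    betaF α j ≤ (j : ℝ) - Real.sqrt j := by
  have hs : Real.sqrt j * Real.sqrt j = j := Real.mul_self_sqrt (by positivity)
  have h2 : (2 : ℝ) ≤ Real.sqrt j := by
    rw [show (2 : ℝ) = Real.sqrt 4 by
      rw [show (4 : ℝ) = 2 ^ 2 by norm_num, Real.sqrt_sq (by norm_num)]]
    exact Real.sqrt_le_sqrt (by exact_mod_cast hj)
  have h3 : 2 * Real.sqrt j ≤ j := by nlinarith
  have : 0 ≤ (1 - α) * ((j : ℝ) - 2 * Real.sqrt j) := by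
    apply mul_nonneg (by linarith); linarith
  unfold betaF; nlinarith

end Stmt15Aux

/-- For coprime positive integers `n₁, n₂` and `α ∈ [0,1]`, every sufficiently large `j`
can be written as `j = n₁·N₁ⱼ + n₂·N₂ⱼ` with positive integers `N₁ⱼ, N₂ⱼ → ∞` such that
`n₁·N₁ⱼ/(n₁·N₁ⱼ + n₂·N₂ⱼ) → α`. -/
theorem stmt15 (n₁ n₂ : ℕ) (h₁ : 0 < n₁) (h₂ : 0 < n₂) (hcop : Nat.Coprime n₁ n₂)
    (α : ℝ) (hα : α ∈ Set.Icc (0 : ℝ) 1) :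
    ∃ (j₀ : ℕ) (N₁ N₂ : ℕ → ℕ),
      (∀ j, j₀ ≤ j → 0 < N₁ j ∧ 0 < N₂ j ∧ n₁ * N₁ j + n₂ * N₂ j = j) ∧
      Tendsto N₁ atTop atTop ∧ Tendsto N₂ atTop atTop ∧
      Tendsto (fun j => (n₁ * N₁ j : ℝ) / ((n₁ * N₁ j : ℝ) + (n₂ * N₂ j : ℝ)))
        atTop (𝓝 α) := by
  classical
  obtain ⟨hα0, hα1⟩ := hα
  haveI : NeZero n₂ := ⟨h₂.ne'⟩
  open Stmt15Aux in
  set N₁ : ℕ → ℕ := N1F n₁ n₂ α with hN1def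
  set N₂ : ℕ → ℕ := N2F n₁ n₂ α with hN2def
  set K : ℕ := n₁ * (n₂ + 1) + n₂ with hK
  set j₀ : ℕ := max 4 (K ^ 2) with hj₀
  -- key: for j ≥ j₀, n₁ * N₁ j + n₂ ≤ j
  have hsqrtK : ∀ j : ℕ, j₀ ≤ j → (K : ℝ) ≤ Real.sqrt j := by
    intro j hj
    have h1 : (K : ℝ) = Real.sqrt ((K : ℝ) ^ 2) := by
      rw [Real.sqrt_sq (by positivity)]
    rw [h1]
    apply Real.sqrt_le_sqrt
    have : (K ^ 2 : ℕ) ≤ j := le_trans (le_max_right _ _) hj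
    exact_mod_cast this
  have h4 : ∀ j : ℕ, j₀ ≤ j → 4 ≤ j := fun j hj => le_trans (le_max_left _ _) hj
  have hβ0 : ∀ j : ℕ, 4 ≤ j → 0 ≤ Stmt15Aux.betaF α j := by
    intro j hj
    exact le_trans (Real.sqrt_nonneg _) (Stmt15Aux.beta_ge α hα0 j hj)
  have hkey : ∀ j : ℕ, j₀ ≤ j → n₁ * N₁ j + n₂ ≤ j := by
    intro j hj
    have hr : ((n₁ * N₁ j + n₂ : ℕ) : ℝ) ≤ (j : ℝ) := by
      push_cast
      have hu := Stmt15Aux.N1_upper n₁ h₁ n₂ α j (hβ0 j (h4 j hj))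
      have hb := Stmt15Aux.beta_le α hα1 j (h4 j hj)
      have hs := hsqrtK j hj
      have : (K : ℝ) = n₁ * (n₂ + 1) + n₂ := by rw [hK]; push_cast; ring
      nlinarith [hu, hb, hs]
    exact_mod_cast hr
  have hdvd : ∀ j : ℕ, n₁ * N₁ j ≤ j → n₂ ∣ j - n₁ * N₁ j := by
    intro j hle
    apply (ZMod.natCast_eq_zero_iff _ _).mp
    have : ((j - n₁ * N₁ j : ℕ) : ZMod n₂) = (j : ZMod n₂) - ((n₁ * N₁ j : ℕ) : ZMod n₂) := by
      push_cast [Nat.cast_sub hle]; ring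
    rw [this, Stmt15Aux.N1_mod n₁ n₂ hcop α j, sub_self]
  have hsum : ∀ j : ℕ, j₀ ≤ j → n₁ * N₁ j + n₂ * N₂ j = j := by
    intro j hj
    have hle : n₁ * N₁ j ≤ j := le_trans (Nat.le_add_right _ _) (hkey j hj)
    have h2 : n₂ * N₂ j = j - n₁ * N₁ j := Nat.mul_div_cancel' (hdvd j hle)
    omega
  have hN2pos : ∀ j : ℕ, j₀ ≤ j → 0 < N₂ j := by
    intro j hj
    have h1 := hsum j hj
    have h2 := hkey j hj
    by_contra h
    push_neg at h
    interval_cases hN : N₂ j <;> omega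
  have hN1pos : ∀ j : ℕ, j₀ ≤ j → 0 < N₁ j := by
    intro j hj
    have hr : Real.sqrt j ≤ (n₁ : ℝ) * N₁ j :=
      le_trans (Stmt15Aux.beta_ge α hα0 j (h4 j hj)) (Stmt15Aux.N1_lower n₁ h₁ n₂ α j)
    have hjpos : (0 : ℝ) < Real.sqrt j := by
      have : (4 : ℝ) ≤ (j : ℝ) := by exact_mod_cast h4 j hj
      apply Real.sqrt_pos.mpr; linarith
    have : (0 : ℝ) < (n₁ : ℝ) * N₁ j := lt_of_lt_of_le hjpos hr
    by_contra h
    push_neg at h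
    interval_cases hN : N₁ j
    simp at this
  -- tendsto N₁
  have htend1 : Tendsto N₁ atTop atTop := by
    rw [tendsto_atTop]
    intro C
    filter_upwards [eventually_ge_atTop (max j₀ ((n₁ * C) ^ 2))] with j hj
    have hj₀' : j₀ ≤ j := le_trans (le_max_left _ _) hj
    have hsq : ((n₁ * C : ℕ) : ℝ) ≤ Real.sqrt j := by
      rw [show ((n₁ * C : ℕ) : ℝ) = Real.sqrt (((n₁ * C : ℕ) : ℝ) ^ 2) by
        rw [Real.sqrt_sq (by positivity)]]
      apply Real.sqrt_le_sqrt
      have : ((n₁ * C) ^ 2 : ℕ) ≤ j := le_trans (le_max_right _ _) hj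
      exact_mod_cast this
    have hr : Real.sqrt j ≤ (n₁ : ℝ) * N₁ j :=
      le_trans (Stmt15Aux.beta_ge α hα0 j (h4 j hj₀')) (Stmt15Aux.N1_lower n₁ h₁ n₂ α j)
    have : ((n₁ * C : ℕ) : ℝ) ≤ ((n₁ * N₁ j : ℕ) : ℝ) := by push_cast; push_cast at hsq; linarith
    have h2 : n₁ * C ≤ n₁ * N₁ j := by exact_mod_cast this
    exact Nat.le_of_mul_le_mul_left h2 h₁
  -- tendsto N₂
  have hN2lb : ∀ j : ℕ, j₀ ≤ j → Real.sqrt j - (n₁ * (n₂ + 1) : ℝ) ≤ (n₂ : ℝ) * N₂ j := by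
    intro j hj
    have h1 := hsum j hj
    have h2 : ((n₂ * N₂ j : ℕ) : ℝ) = (j : ℝ) - ((n₁ * N₁ j : ℕ) : ℝ) := by
      have : ((n₁ * N₁ j + n₂ * N₂ j : ℕ) : ℝ) = (j : ℝ) := by exact_mod_cast h1
      push_cast at this ⊢
      linarith
    have hu := Stmt15Aux.N1_upper n₁ h₁ n₂ α j (hβ0 j (h4 j hj))
    have hb := Stmt15Aux.beta_le α hα1 j (h4 j hj)
    push_cast at h2 ⊢
    nlinarith
  have htend2 : Tendsto N₂ atTop atTop := by
    rw [tendsto_atTop]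
    intro C
    filter_upwards [eventually_ge_atTop (max j₀ ((n₂ * C + n₁ * (n₂ + 1)) ^ 2))] with j hj
    have hj₀' : j₀ ≤ j := le_trans (le_max_left _ _) hj
    have hsq : ((n₂ * C + n₁ * (n₂ + 1) : ℕ) : ℝ) ≤ Real.sqrt j := by
      rw [show ((n₂ * C + n₁ * (n₂ + 1) : ℕ) : ℝ)
          = Real.sqrt (((n₂ * C + n₁ * (n₂ + 1) : ℕ) : ℝ) ^ 2) by
        rw [Real.sqrt_sq (by positivity)]]
      apply Real.sqrt_le_sqrt
      have : ((n₂ * C + n₁ * (n₂ + 1)) ^ 2 : ℕ) ≤ j := le_trans (le_max_right _ _) hj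
      exact_mod_cast this
    have hlb := hN2lb j hj₀'
    have : ((n₂ * C : ℕ) : ℝ) ≤ ((n₂ * N₂ j : ℕ) : ℝ) := by
      push_cast at hsq ⊢
      linarith
    have h2 : n₂ * C ≤ n₂ * N₂ j := by exact_mod_cast this
    exact Nat.le_of_mul_le_mul_left h2 h₂
  -- the ratio
  have hsqrt_tend : Tendsto (fun j : ℕ => Real.sqrt j / j) atTop (𝓝 0) := by
    have h1 : Tendsto (fun j : ℕ => Real.sqrt j) atTop atTop :=
      (Filter.tendsto_atTop_atTop.mpr (fun b => ⟨⌈b ^ 2⌉₊ + 1, fun j hj => by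
        have hb2 : (b ^ 2 : ℝ) ≤ j := le_trans (Nat.le_ceil _) (by exact_mod_cast hj.trans' (Nat.le_succ _))
        calc b ≤ |b| := le_abs_self b
          _ = Real.sqrt (b ^ 2) := (Real.sqrt_sq_eq_abs b).symm
          _ ≤ Real.sqrt j := Real.sqrt_le_sqrt hb2⟩))
    have h2 : Tendsto (fun j : ℕ => (Real.sqrt j)⁻¹) atTop (𝓝 0) :=
      h1.inv_tendsto_atTop
    apply h2.congr'
    filter_upwards [eventually_ge_atTop 1] with j hj
    have hjpos : (0 : ℝ) < j := by exact_mod_cast hj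
    have hs : Real.sqrt j * Real.sqrt j = j := Real.mul_self_sqrt hjpos.le
    have hspos : (0 : ℝ) < Real.sqrt j := Real.sqrt_pos.mpr hjpos
    rw [inv_eq_one_div, div_eq_div_iff hspos.ne' hjpos.ne' , one_mul]
    exact hs.symm
  have hinv_tend : Tendsto (fun j : ℕ => (1 : ℝ) / j) atTop (𝓝 0) :=
    tendsto_one_div_atTop_nhds_zero_nat
  have hlow : Tendsto (fun j : ℕ => α + (1 - 2 * α) * (Real.sqrt j / j)) atTop (𝓝 α) := by
    have h1 := hsqrt_tend.const_mul (1 - 2 * α)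
    have h0 : Tendsto (fun _ : ℕ => α) atTop (𝓝 α) := tendsto_const_nhds
    have h2 := h0.add h1
    simpa using h2
  have hhigh : Tendsto (fun j : ℕ => α + (1 - 2 * α) * (Real.sqrt j / j)
      + (n₁ * (n₂ + 1) : ℝ) * (1 / j)) atTop (𝓝 α) := by
    have := hinv_tend.const_mul ((n₁ * (n₂ + 1) : ℝ))
    have h2 := hlow.add this
    simpa using h2
  have htend3 : Tendsto (fun j => (n₁ * N₁ j : ℝ) / ((n₁ * N₁ j : ℝ) + (n₂ * N₂ j : ℝ)))
      atTop (𝓝 α) := by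
    apply tendsto_of_tendsto_of_tendsto_of_le_of_le' hlow hhigh
    · filter_upwards [eventually_ge_atTop j₀, eventually_ge_atTop 1] with j hj hj1
      have hsumr : (n₁ * N₁ j : ℝ) + (n₂ * N₂ j : ℝ) = (j : ℝ) := by
        exact_mod_cast hsum j hj
      rw [hsumr]
      have hjpos : (0 : ℝ) < j := by exact_mod_cast hj1
      have : Stmt15Aux.betaF α j ≤ (n₁ : ℝ) * N₁ j := Stmt15Aux.N1_lower n₁ h₁ n₂ α j
      rw [le_div_iff₀ hjpos]
      unfold Stmt15Aux.betaF at this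
      have hj0 : (j : ℝ) ≠ 0 := hjpos.ne'
      calc (α + (1 - 2 * α) * (Real.sqrt j / j)) * j
          = α * j + (1 - 2 * α) * Real.sqrt j := by field_simp
        _ ≤ (n₁ : ℝ) * N₁ j := this
        _ = (n₁ * N₁ j : ℝ) := by push_cast; ring
    · filter_upwards [eventually_ge_atTop j₀, eventually_ge_atTop 1] with j hj hj1
      have hsumr : (n₁ * N₁ j : ℝ) + (n₂ * N₂ j : ℝ) = (j : ℝ) := by
        exact_mod_cast hsum j hj
      rw [hsumr]
      have hjpos : (0 : ℝ) < j := by exact_mod_cast hj1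
      rw [div_le_iff₀ hjpos]
      have hu := Stmt15Aux.N1_upper n₁ h₁ n₂ α j (hβ0 j (h4 j hj))
      unfold Stmt15Aux.betaF at hu
      have hj0 : (j : ℝ) ≠ 0 := hjpos.ne'
      calc (n₁ * N₁ j : ℝ) = (n₁ : ℝ) * N₁ j := by push_cast; ring
        _ ≤ α * j + (1 - 2 * α) * Real.sqrt j + n₁ * (n₂ + 1) := hu
        _ = (α + (1 - 2 * α) * (Real.sqrt j / j) + (n₁ * (n₂ + 1) : ℝ) * (1 / j)) * j := by
            field_simp
  exact ⟨j₀, N₁, N₂, fun j hj => ⟨hN1pos j hj, hN2pos j hj, hsum j hj⟩, htend1, htend2, htend3⟩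
end
end

section
/- There exists R > 0 such that for every c ∈ ℂ with |c| > R and every periodic point z of f_c of exact period n ≥ 1, the multiplier ρ = (f_c^{∘n})'(z) satisfies (2√|c| − 2)^n < |ρ| < (2√|c| + 2)^n. -/
open Complex Set Filter Topology

noncomputable section

lemma fc_diff (c : ℂ) : Differentiable ℂ (fc c) := by
  unfold fc; fun_prop

lemma deriv_fc (c z : ℂ) : deriv (fc c) z = 2 * z := by
  unfold fc
  rw [deriv_add_const]
  simp [deriv_pow]

lemma iter_diff (c : ℂ) (n : ℕ) : Differentiable ℂ ((fc c)^[n]) := by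
  induction n with
  | zero => simpa using differentiable_id
  | succ n ih => rw [Function.iterate_succ']; exact (fc_diff c).comp ih

lemma deriv_iter_succ (c : ℂ) (n : ℕ) (z : ℂ) :
    deriv ((fc c)^[n+1]) z = 2 * (fc c)^[n] z * deriv ((fc c)^[n]) z := by
  rw [Function.iterate_succ']
  rw [deriv_comp z (fc_diff c).differentiableAt (iter_diff c n).differentiableAt, deriv_fc]

lemma abs_fc_ge (c w : ℂ) : ‖w‖ ^ 2 - ‖c‖ ≤ ‖fc c w‖ := by
  have h : ‖w ^ 2‖ ≤ ‖fc c w‖ + ‖c‖ := by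
    have := norm_sub_le (w ^ 2 + c) c
    simpa [fc] using this
  have h2 : ‖w ^ 2‖ = ‖w‖ ^ 2 := norm_pow _ _
  linarith

lemma escape (c : ℂ) (s : ℝ) (hs : s ^ 2 = ‖c‖) (hs2 : 2 ≤ s) (w : ℂ)
    (hw : s + 1 ≤ ‖w‖) :
    ∀ k : ℕ, ‖w‖ + k * s ≤ ‖(fc c)^[k] w‖ := by
  intro k
  induction k with
  | zero => simp
  | succ k ih =>
    rw [Function.iterate_succ_apply']
    have hb := abs_fc_ge c ((fc c)^[k] w)
    have hx : s + 1 ≤ ‖(fc c)^[k] w‖ := by nlinarith [k.cast_nonneg (α := ℝ)]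
    push_cast
    nlinarith [hx]

lemma abs_fc_ge' (c w : ℂ) : ‖c‖ - ‖w‖ ^ 2 ≤ ‖fc c w‖ := by
  have h : ‖c‖ ≤ ‖fc c w‖ + ‖w ^ 2‖ := by
    have := norm_sub_le (w ^ 2 + c) (w ^ 2)
    simpa [fc, norm_sub_le] using this
  have h2 : ‖w ^ 2‖ = ‖w‖ ^ 2 := norm_pow _ _
  linarith

lemma annulus (c : ℂ) (s : ℝ) (hs : s ^ 2 = ‖c‖) (hs2 : 2 ≤ s)
    (n : ℕ) (hn : 1 ≤ n) (w : ℂ) (hw : (fc c)^[n] w = w) :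
    s - 1 < ‖w‖ ∧ ‖w‖ < s + 1 := by
  have upper : ∀ u : ℂ, (fc c)^[n] u = u → ‖u‖ < s + 1 := by
    intro u hu
    by_contra h
    push_neg at h
    have := escape c s hs hs2 u h n
    rw [hu] at this
    have hns : (1:ℝ) * s ≤ n * s := by
      apply mul_le_mul_of_nonneg_right _ (by linarith)
      exact_mod_cast hn
    linarith
  have hup := upper w hw
  constructor
  · by_contra h
    push_neg at h
    have hfw : (fc c)^[n] (fc c w) = fc c w := by
      rw [← Function.iterate_succ_apply, Function.iterate_succ_apply', hw]
    have h1 := upper _ hfw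
    have h2 := abs_fc_ge' c w
    have h3 : 0 ≤ ‖w‖ := norm_nonneg w
    nlinarith
  · exact hup


/-- For `|c|` large enough, the multiplier `ρ` of every periodic orbit of exact period
`n` of `f_c` satisfies `(2√|c| - 2)^n < |ρ| < (2√|c| + 2)^n`. -/
theorem stmt16 :
    ∃ R : ℝ, 0 < R ∧ ∀ c : ℂ, R < ‖c‖ → ∀ (n : ℕ) (z : ℂ),
      ExactPeriodic c n z →
        (2 * Real.sqrt (‖c‖) - 2) ^ n < ‖multiplier c n z‖ ∧
        ‖multiplier c n z‖ < (2 * Real.sqrt (‖c‖) + 2) ^ n := by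
  refine ⟨4, by norm_num, ?_⟩
  intro c hc n z hz
  obtain ⟨hn, hper, -⟩ := hz
  set s := Real.sqrt (‖c‖) with hsdef
  have hca : (0:ℝ) ≤ ‖c‖ := norm_nonneg c
  have hs : s ^ 2 = ‖c‖ := Real.sq_sqrt hca
  have hs2 : 2 < s := by
    have h4 : Real.sqrt 4 < s := Real.sqrt_lt_sqrt (by norm_num) hc
    rwa [show (4:ℝ) = 2^2 by norm_num, Real.sqrt_sq (by norm_num)] at h4
  have hper' : (fc c)^[n] z = z := hper
  have horb : ∀ k : ℕ, (fc c)^[n] ((fc c)^[k] z) = (fc c)^[k] z := by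
    intro k
    rw [← Function.iterate_add_apply, add_comm, Function.iterate_add_apply, hper']
  have hann : ∀ k : ℕ, s - 1 < ‖(fc c)^[k] z‖ ∧
      ‖(fc c)^[k] z‖ < s + 1 :=
    fun k => annulus c s hs hs2.le n hn _ (horb k)
  have key : ∀ m : ℕ, 1 ≤ m →
      (2*s - 2) ^ m < ‖deriv ((fc c)^[m]) z‖ ∧
      ‖deriv ((fc c)^[m]) z‖ < (2*s + 2) ^ m := by
    intro m hm
    induction m, hm using Nat.le_induction with
    | base =>
      have e : deriv ((fc c)^[1]) z = 2 * z := by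
        have := deriv_iter_succ c 0 z; simpa using this
      rw [e, norm_mul, Complex.norm_two]
      have h0 := hann 0
      simp only [Function.iterate_zero, id_eq] at h0
      constructor <;> [skip; skip] <;> rw [pow_one] <;> linarith [h0.1, h0.2]
    | succ m hm ih =>
      have e : ‖deriv ((fc c)^[m+1]) z‖
          = (2 * ‖(fc c)^[m] z‖) * ‖deriv ((fc c)^[m]) z‖ := by
        rw [deriv_iter_succ, norm_mul, norm_mul, Complex.norm_two]
      have ha := hann m
      have habs : (0:ℝ) ≤ ‖deriv ((fc c)^[m]) z‖ := norm_nonneg _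
      constructor
      · calc (2*s - 2) ^ (m+1) = (2*s - 2) * (2*s - 2)^m := by ring
          _ < (2 * ‖(fc c)^[m] z‖) * ‖deriv ((fc c)^[m]) z‖ :=
              mul_lt_mul'' (by linarith [ha.1]) ih.1 (by linarith) (pow_nonneg (by linarith) m)
          _ = _ := e.symm
      · calc ‖deriv ((fc c)^[m+1]) z‖
            = (2 * ‖(fc c)^[m] z‖) * ‖deriv ((fc c)^[m]) z‖ := e
          _ < (2*s + 2) * (2*s + 2)^m :=
              mul_lt_mul'' (by linarith [ha.2]) ih.2 (by positivity) habs
          _ = (2*s + 2) ^ (m+1) := by ring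
  have := key n hn
  simpa [multiplier, fIter] using this
end
end
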